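/- Let P = {p_1,…,p_n} be points each covered by at least one disk of a finite weighted disk set S. Define the dynamic program values: δ_0 = 0, and δ_i = min over disks s containing p_i of (w(s) + δ_{f(s,i)}), where f(s,i) is the largest index j < i with p_j ∉ s (or 0 if none). Then δ_n equals the minimum total weight of a subset S' ⊆ S such that every p_i belongs to some disk of S', provided that S is line-separable from P by a line with all disks being unit disks centered below the line and all points above it. -/
import Mathlib


open scoped Classical

/-- The dynamic-programming values: `δ_0 = 0` and
`δ_i = min_{s ∈ S, p_i ∈ s} (w(s) + δ_{f(s,i)})`, where `f(s,i)` is the largest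
index `j < i` with `p_j ∉ s` (`0` if none). Here `mem i s` means that the point
`p_i` lies in the disk `s`. -/
noncomputable def deltaRec {ι : Type*} (S : Finset ι) (w : ι → ℝ)
    (mem : ℕ → ι → Prop) : ℕ → ℝ
  | 0 => 0
  | (i + 1) =>
    sInf {x : ℝ | ∃ s ∈ S, mem (i + 1) s ∧
      x = w s + deltaRec S w mem (Nat.findGreatest (fun j => ¬ mem j s) i)}
  decreasing_by exact Nat.lt_succ_of_le (Nat.findGreatest_le i)

/-- Membership in a disk (center below the axis) for a point above the axis,
in terms of the upper boundary function. -/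
private lemma memg {ρ a b x y : ℝ} (hρ : 0 < ρ) (hb : b < 0) (hy : 0 ≤ y) :
    (x - a) ^ 2 + (y - b) ^ 2 ≤ ρ ^ 2 ↔ y ≤ b + Real.sqrt (ρ ^ 2 - (x - a) ^ 2) := by
  rcases le_or_gt 0 (ρ ^ 2 - (x - a) ^ 2) with h | h
  · have hs := Real.sq_sqrt h
    have hn := Real.sqrt_nonneg (ρ ^ 2 - (x - a) ^ 2)
    constructor
    · intro hle
      nlinarith
    · intro hle
      nlinarith
  · have hz : Real.sqrt (ρ ^ 2 - (x - a) ^ 2) = 0 := Real.sqrt_eq_zero'.2 h.le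
    rw [hz]
    constructor
    · intro hle; nlinarith
    · intro hle; nlinarith

/-- If two points of a disk are above the axis, then the points of the axis
between them (horizontally) are in the disk. -/
private lemma zero_mem {ρ a b x1 y1 x3 y3 x : ℝ} (hb : b < 0) (hy1 : 0 ≤ y1) (hy3 : 0 ≤ y3)
    (h1 : (x1 - a) ^ 2 + (y1 - b) ^ 2 ≤ ρ ^ 2) (h3 : (x3 - a) ^ 2 + (y3 - b) ^ 2 ≤ ρ ^ 2)
    (hx1 : x1 ≤ x) (hx3 : x ≤ x3) : (x - a) ^ 2 + (0 - b) ^ 2 ≤ ρ ^ 2 := by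
  rcases le_or_gt x a with h | h
  · nlinarith [mul_nonneg (sub_nonneg.2 hx1) (by linarith : (0:ℝ) ≤ a - x1),
      mul_nonneg hy1 (by linarith : (0:ℝ) ≤ y1 - 2 * b)]
  · nlinarith [mul_nonneg (sub_nonneg.2 hx3) (by linarith : (0:ℝ) ≤ x3 - a),
      mul_nonneg hy3 (by linarith : (0:ℝ) ≤ y3 - 2 * b)]

/-- A point of the upper boundary with nonnegative ordinate is on the circle. -/
private lemma on_circle {ρ a b x : ℝ} (hρ : 0 < ρ) (hb : b < 0)
    (hg : 0 ≤ b + Real.sqrt (ρ ^ 2 - (x - a) ^ 2)) :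
    (x - a) ^ 2 + (b + Real.sqrt (ρ ^ 2 - (x - a) ^ 2) - b) ^ 2 = ρ ^ 2 := by
  have hpos : 0 ≤ ρ ^ 2 - (x - a) ^ 2 := by
    by_contra hneg
    rw [Real.sqrt_eq_zero'.2 (by linarith)] at hg
    linarith
  have := Real.sq_sqrt hpos
  nlinarith [Real.sqrt_nonneg (ρ ^ 2 - (x - a) ^ 2)]

/-- Two distinct points with nonnegative ordinates cannot both lie on two
equal-radius circles whose centers are below the axis. -/
private lemma two_crossings_false {ρ as bs at' bt u v yu yv : ℝ}
    (hbs : bs < 0) (hbt : bt < 0) (hyu : 0 ≤ yu) (hyv : 0 ≤ yv) (huv : u ≠ v)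
    (hne : ¬(as = at' ∧ bs = bt))
    (e1 : (u - as) ^ 2 + (yu - bs) ^ 2 = ρ ^ 2) (e2 : (u - at') ^ 2 + (yu - bt) ^ 2 = ρ ^ 2)
    (e3 : (v - as) ^ 2 + (yv - bs) ^ 2 = ρ ^ 2) (e4 : (v - at') ^ 2 + (yv - bt) ^ 2 = ρ ^ 2) :
    False := by
  set P := u - v with hP
  set Q := yu - yv with hQ
  set A := as - at' with hA
  set B := bs - bt with hB
  set R := u + v - as - at' with hR
  set Sv := yu + yv - bs - bt with hSv
  have hPne : P ≠ 0 := sub_ne_zero.2 huv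
  have h1 : A * P + B * Q = 0 := by linear_combination (-e1 + e2 + e3 - e4) / 2
  have h2 : A * R + B * Sv = 0 := by linear_combination (-e1 + e2 - e3 + e4) / 2
  have h3 : P * R + Q * Sv = 0 := by linear_combination e1 - e3 + h1
  have hSpos : 0 < Sv := by simp only [hSv]; linarith
  by_cases hBz : B = 0
  · have hAz : A ≠ 0 := by
      intro hAz
      exact hne ⟨by linarith [sub_eq_zero.1 hAz], by linarith [sub_eq_zero.1 hBz]⟩
    have : A * P = 0 := by linarith [mul_eq_zero_of_left hBz Q]
    rcases mul_eq_zero.1 this with h | h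
    · exact hAz h
    · exact hPne h
  · have h4 : B * (Sv * P - Q * R) = 0 := by linear_combination P * h2 - R * h1
    have h5 : Sv * P - Q * R = 0 := by
      rcases mul_eq_zero.1 h4 with h | h
      · exact absurd h hBz
      · exact h
    have h6 : Sv * (P ^ 2 + Q ^ 2) = 0 := by linear_combination P * h5 + Q * h3
    have hPQ : P ^ 2 + Q ^ 2 ≠ 0 := by positivity
    rcases mul_eq_zero.1 h6 with h | h
    · linarith
    · exact hPQ h

/-- The key crossing lemma for equal-radius disks centered below the axis. -/
private lemma crossing {ρ as bs at' bt x1 y1 x2 y2 x3 y3 : ℝ} (hρ : 0 < ρ)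
    (hbs : bs < 0) (hbt : bt < 0) (hy1 : 0 ≤ y1) (hy2 : 0 ≤ y2) (hy3 : 0 ≤ y3)
    (h12 : x1 < x2) (h23 : x2 < x3)
    (h1s : (x1 - as) ^ 2 + (y1 - bs) ^ 2 ≤ ρ ^ 2)
    (h3s : (x3 - as) ^ 2 + (y3 - bs) ^ 2 ≤ ρ ^ 2)
    (h2s : ¬((x2 - as) ^ 2 + (y2 - bs) ^ 2 ≤ ρ ^ 2))
    (h2t : (x2 - at') ^ 2 + (y2 - bt) ^ 2 ≤ ρ ^ 2) :
    (x1 - at') ^ 2 + (y1 - bt) ^ 2 ≤ ρ ^ 2 ∨ (x3 - at') ^ 2 + (y3 - bt) ^ 2 ≤ ρ ^ 2 := by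
  by_contra hcon
  push_neg at hcon
  obtain ⟨h1t, h3t⟩ := hcon
  by_cases hne : as = at' ∧ bs = bt
  · rw [hne.1, hne.2] at h2s; exact h2s h2t
  set gs : ℝ → ℝ := fun x => bs + Real.sqrt (ρ ^ 2 - (x - as) ^ 2) with hgs
  set gt : ℝ → ℝ := fun x => bt + Real.sqrt (ρ ^ 2 - (x - at') ^ 2) with hgt
  have hcont : Continuous fun x => gs x - gt x := by
    apply Continuous.sub
    · exact continuous_const.add (Real.continuous_sqrt.comp (by continuity))
    · exact continuous_const.add (Real.continuous_sqrt.comp (by continuity))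
  have d1 : 0 < gs x1 - gt x1 := by
    have hA := (memg hρ hbs hy1).1 h1s
    have hB : ¬ y1 ≤ gt x1 := fun h => absurd ((memg hρ hbt hy1).2 h) (by linarith)
    push_neg at hB
    simp only [hgs, hgt] at *
    linarith
  have d2 : gs x2 - gt x2 < 0 := by
    have hA : ¬ y2 ≤ gs x2 := fun h => h2s ((memg hρ hbs hy2).2 h)
    have hB := (memg hρ hbt hy2).1 h2t
    push_neg at hA
    simp only [hgs, hgt] at *
    linarith
  have d3 : 0 < gs x3 - gt x3 := by
    have hA := (memg hρ hbs hy3).1 h3s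
    have hB : ¬ y3 ≤ gt x3 := fun h => absurd ((memg hρ hbt hy3).2 h) (by linarith)
    push_neg at hB
    simp only [hgs, hgt] at *
    linarith
  -- crossings
  obtain ⟨u, hu, hdu⟩ := intermediate_value_Icc' h12.le hcont.continuousOn
    (Set.mem_Icc.2 ⟨d2.le, d1.le⟩)
  obtain ⟨v, hv, hdv⟩ := intermediate_value_Icc h23.le hcont.continuousOn
    (Set.mem_Icc.2 ⟨d2.le, d3.le⟩)
  have hdu' : gs u - gt u = 0 := hdu
  have hdv' : gs v - gt v = 0 := hdv
  have huv : u ≠ v := by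
    intro h
    have hux : u = x2 := le_antisymm hu.2 (h ▸ hv.1)
    rw [hux] at hdu'
    linarith
  have hgu : gs u = gt u := by linarith
  have hgv : gs v = gt v := by linarith
  -- nonnegativity of the crossing ordinates
  have hu0 : 0 ≤ gs u := by
    have h0 : (u - as) ^ 2 + (0 - bs) ^ 2 ≤ ρ ^ 2 :=
      zero_mem hbs hy1 hy3 h1s h3s hu.1 (le_trans hu.2 h23.le)
    exact (memg hρ hbs le_rfl).1 h0
  have hv0 : 0 ≤ gs v := by
    have h0 : (v - as) ^ 2 + (0 - bs) ^ 2 ≤ ρ ^ 2 :=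
      zero_mem hbs hy1 hy3 h1s h3s (le_trans h12.le hv.1) hv.2
    exact (memg hρ hbs le_rfl).1 h0
  -- circle equations
  have e1 : (u - as) ^ 2 + (gs u - bs) ^ 2 = ρ ^ 2 := by
    have := on_circle (a := as) (x := u) hρ hbs (by simpa [hgs] using hu0)
    simpa [hgs] using this
  have e2 : (u - at') ^ 2 + (gs u - bt) ^ 2 = ρ ^ 2 := by
    have := on_circle (a := at') (x := u) hρ hbt (by rw [hgu] at hu0; simpa [hgt] using hu0)
    rw [hgu]
    simpa [hgt] using this
  have e3 : (v - as) ^ 2 + (gs v - bs) ^ 2 = ρ ^ 2 := by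
    have := on_circle (a := as) (x := v) hρ hbs (by simpa [hgs] using hv0)
    simpa [hgs] using this
  have e4 : (v - at') ^ 2 + (gs v - bt) ^ 2 = ρ ^ 2 := by
    have := on_circle (a := at') (x := v) hρ hbt (by rw [hgv] at hv0; simpa [hgt] using hv0)
    rw [hgv]
    simpa [hgt] using this
  exact two_crossings_false hbs hbt hu0 hv0 huv hne e1 e2 e3 e4

private lemma dp_correct {ι : Type*} (S : Finset ι) (w : ι → ℝ) (mem : ℕ → ι → Prop)
    (hw : ∀ s ∈ S, 0 < w s) (n : ℕ)
    (hcov : ∀ i, 1 ≤ i → i ≤ n → ∃ s ∈ S, mem i s)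
    (hcross : ∀ s ∈ S, ∀ t ∈ S, ∀ j f m, 1 ≤ j → j < f → f < m → m ≤ n →
      mem j s → mem m s → ¬ mem f s → mem f t → mem j t ∨ mem m t) :
    deltaRec S w mem n = sInf {x : ℝ | ∃ S' : Finset ι, S' ⊆ S ∧
      (∀ i, 1 ≤ i → i ≤ n → ∃ s ∈ S', mem i s) ∧ x = ∑ s ∈ S', w s} := by
  set opt : ℕ → ℝ := fun k => sInf {x : ℝ | ∃ S' : Finset ι, S' ⊆ S ∧
      (∀ i, 1 ≤ i → i ≤ k → ∃ s ∈ S', mem i s) ∧ x = ∑ s ∈ S', w s} with hopt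
  -- basic facts about the opt sets
  have hmemopt : ∀ k, k ≤ n → ∀ S' : Finset ι, S' ⊆ S →
      (∀ i, 1 ≤ i → i ≤ k → ∃ s ∈ S', mem i s) →
      (∑ s ∈ S', w s) ∈ {x : ℝ | ∃ S' : Finset ι, S' ⊆ S ∧
        (∀ i, 1 ≤ i → i ≤ k → ∃ s ∈ S', mem i s) ∧ x = ∑ s ∈ S', w s} := by
    intro k hk S' h1 h2
    exact ⟨S', h1, h2, rfl⟩
  have hne : ∀ k, k ≤ n → Set.Nonempty {x : ℝ | ∃ S' : Finset ι, S' ⊆ S ∧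
      (∀ i, 1 ≤ i → i ≤ k → ∃ s ∈ S', mem i s) ∧ x = ∑ s ∈ S', w s} := by
    intro k hk
    exact ⟨_, ⟨S, Finset.Subset.refl S, fun i h1 h2 => hcov i h1 (h2.trans hk), rfl⟩⟩
  have hlb : ∀ k, ∀ x ∈ {x : ℝ | ∃ S' : Finset ι, S' ⊆ S ∧
      (∀ i, 1 ≤ i → i ≤ k → ∃ s ∈ S', mem i s) ∧ x = ∑ s ∈ S', w s}, (0:ℝ) ≤ x := by
    rintro k x ⟨S', hsub, -, rfl⟩
    exact Finset.sum_nonneg fun s hs => (hw s (hsub hs)).le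
  have hbdd : ∀ k, BddBelow {x : ℝ | ∃ S' : Finset ι, S' ⊆ S ∧
      (∀ i, 1 ≤ i → i ≤ k → ∃ s ∈ S', mem i s) ∧ x = ∑ s ∈ S', w s} :=
    fun k => ⟨0, fun x hx => hlb k x hx⟩
  have hoptnn : ∀ k, k ≤ n → 0 ≤ opt k := fun k hk => le_csInf (hne k hk) (hlb k)
  have key : ∀ i, i ≤ n → deltaRec S w mem i = opt i := by
    intro i
    induction i using Nat.strong_induction_on with
    | _ i ih =>
      intro hin
      match i with
      | 0 =>
        rw [deltaRec, hopt]
        refine le_antisymm (le_csInf (hne 0 (Nat.zero_le n)) (hlb 0)) ?_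
        refine csInf_le (hbdd 0) ⟨∅, Finset.empty_subset S, fun i h1 h2 => absurd (h1.trans h2) (by omega), by simp⟩
      | (k + 1) =>
        have hkn : k + 1 ≤ n := hin
        rw [deltaRec]
        -- the recursion set
        set F : ι → ℕ := fun s => Nat.findGreatest (fun j => ¬ mem j s) k with hF
        have hFle : ∀ s, F s ≤ k := fun s => Nat.findGreatest_le k
        have hPFgen : ∀ t, F t ≠ 0 → ¬ mem (F t) t := by
          intro t h
          exact Nat.findGreatest_of_ne_zero (show Nat.findGreatest (fun j => ¬ mem j t) k = F t from rfl) h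
        have hGgen : ∀ t j, F t < j → j ≤ k → mem j t := by
          intro t j h1 h2
          have := Nat.findGreatest_is_greatest (P := fun j => ¬ mem j t) (n := k)
            (show Nat.findGreatest (fun j => ¬ mem j t) k < j from h1) h2
          exact not_not.1 this
        have hdF : ∀ s, deltaRec S w mem (F s) = opt (F s) := fun s =>
          ih (F s) (Nat.lt_succ_of_le (hFle s)) ((hFle s).trans (by omega))
        have hAne : Set.Nonempty {x : ℝ | ∃ s ∈ S, mem (k + 1) s ∧
            x = w s + deltaRec S w mem (F s)} := by
          obtain ⟨s, hs, hms⟩ := hcov (k+1) (by omega) hkn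
          exact ⟨_, s, hs, hms, rfl⟩
        have hAbdd : BddBelow {x : ℝ | ∃ s ∈ S, mem (k + 1) s ∧
            x = w s + deltaRec S w mem (F s)} := by
          refine ⟨0, ?_⟩
          rintro x ⟨s, hs, hms, rfl⟩
          have := hoptnn (F s) ((hFle s).trans (by omega))
          rw [hdF s]
          linarith [hw s hs]
        refine le_antisymm ?_ ?_
        · -- sInf A ≤ opt (k+1)
          refine le_csInf (hne (k+1) hkn) ?_
          rintro x ⟨S', hsub, hcov', rfl⟩
          -- key claim: pick s in S' containing p_{k+1} with minimal F s,
          -- then S'.erase s covers 1..F s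
          have hT : (S'.filter (fun s => mem (k+1) s)).Nonempty := by
            obtain ⟨s, hs, hms⟩ := hcov' (k+1) (by omega) le_rfl
            exact ⟨s, Finset.mem_filter.2 ⟨hs, hms⟩⟩
          obtain ⟨s, hsT, hmin⟩ := Finset.exists_min_image _ F hT
          obtain ⟨hsS', hms⟩ := Finset.mem_filter.1 hsT
          have hsS : s ∈ S := hsub hsS'
          have hclaim : ∀ j, 1 ≤ j → j ≤ F s → ∃ t ∈ S'.erase s, mem j t := by
            intro j hj1 hjF
            have hFsk : F s ≤ k := hFle s
            by_contra hno
            push_neg at hno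
            have honly : ∀ t ∈ S', mem j t → t = s := by
              intro t ht hmt
              by_contra hts
              exact hno t (Finset.mem_erase.2 ⟨hts, ht⟩) hmt
            have hjn : j ≤ n := by omega
            obtain ⟨t0, ht0, hmt0⟩ := hcov' j hj1 (by omega)
            have hjs : mem j s := (honly t0 ht0 hmt0) ▸ hmt0
            have hFpos : 0 < F s := by omega
            have hPF : ¬ mem (F s) s := hPFgen s (by omega)
            have hjltF : j < F s := by
              rcases Nat.lt_or_ge j (F s) with h | h
              · exact h
              · exact absurd (le_antisymm hjF h ▸ hjs) hPF
            have hFn : F s ≤ n := (hFle s).trans (by omega)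
            obtain ⟨t, htS', hFt⟩ := hcov' (F s) (by omega) (by omega)
            have hts : t ≠ s := fun h => hPF (h ▸ hFt)
            have htS : t ∈ S := hsub htS'
            have h1 := hcross s hsS t htS j (F s) (k+1) hj1 hjltF
              (by omega) hkn hjs hms hPF hFt
            have hmt1 : mem (k+1) t := by
              rcases h1 with h | h
              · exact absurd (honly t htS' h) hts
              · exact h
            have htT : t ∈ S'.filter (fun s => mem (k+1) s) :=
              Finset.mem_filter.2 ⟨htS', hmt1⟩
            have hFst : F s ≤ F t := hmin t htT
            have hFstne : F s ≠ F t := by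
              intro h
              exact (hPFgen t (by omega)) (h ▸ hFt)
            have hFlt : F s < F t := lt_of_le_of_ne hFst hFstne
            have hmFt : ¬ mem (F t) t := hPFgen t (by omega)
            have hmFs : mem (F t) s := hGgen s (F t) hFlt (hFle t)
            have h2 := hcross s hsS t htS j (F s) (F t) hj1 hjltF hFlt
              ((hFle t).trans (by omega)) hjs hmFs hPF hFt
            rcases h2 with h | h
            · exact absurd (honly t htS' h) hts
            · exact hmFt h
          -- conclude the inequality
          have step1 : deltaRec S w mem (k+1) ≤ w s + opt (F s) := by
            rw [deltaRec, ← hdF s]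
            exact csInf_le hAbdd ⟨s, hsS, hms, rfl⟩
          have step2 : opt (F s) ≤ ∑ t ∈ S'.erase s, w t := by
            refine csInf_le (hbdd (F s)) ?_
            exact ⟨S'.erase s, (Finset.erase_subset s S').trans hsub, hclaim, rfl⟩
          have step3 : w s + ∑ t ∈ S'.erase s, w t = ∑ t ∈ S', w t :=
            Finset.add_sum_erase S' w hsS'
          calc sInf {x : ℝ | ∃ s ∈ S, mem (k + 1) s ∧
              x = w s + deltaRec S w mem (F s)} = deltaRec S w mem (k+1) := by
                rw [deltaRec]
            _ ≤ w s + opt (F s) := step1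
            _ ≤ w s + ∑ t ∈ S'.erase s, w t := by linarith
            _ = ∑ t ∈ S', w t := step3
        · -- opt (k+1) ≤ sInf A
          refine le_csInf hAne ?_
          rintro x ⟨s, hs, hms, rfl⟩
          rw [hdF s]
          have hFn : F s ≤ n := (hFle s).trans (by omega)
          have : opt (k+1) - w s ≤ opt (F s) := by
            refine le_csInf (hne (F s) hFn) ?_
            rintro y ⟨S'', hsub'', hcov'', rfl⟩
            have hcovall : ∀ i, 1 ≤ i → i ≤ k+1 → ∃ t ∈ insert s S'', mem i t := by
              intro i h1 h2
              rcases le_or_gt i (F s) with h | h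
              · obtain ⟨t, ht, hmt⟩ := hcov'' i h1 h
                exact ⟨t, Finset.mem_insert_of_mem ht, hmt⟩
              · refine ⟨s, Finset.mem_insert_self s S'', ?_⟩
                rcases Nat.lt_or_ge i (k+1) with h' | h'
                · exact hGgen s i h (by omega)
                · have : i = k+1 := by omega
                  exact this ▸ hms
            have hsum : ∑ t ∈ insert s S'', w t ≤ w s + ∑ t ∈ S'', w t := by
              by_cases hsmem : s ∈ S''
              · rw [Finset.insert_eq_self.2 hsmem]
                linarith [hw s hs]
              · rw [Finset.sum_insert hsmem]
            have hle : opt (k+1) ≤ ∑ t ∈ insert s S'', w t :=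
              csInf_le (hbdd (k+1)) ⟨insert s S'', Finset.insert_subset hs hsub'', hcovall, rfl⟩
            linarith
          linarith
  rw [key n le_rfl, hopt]

private lemma dist_le_iff {q cc : EuclideanSpace ℝ (Fin 2)} {ρ : ℝ} (hρ : 0 ≤ ρ) :
    dist q cc ≤ ρ ↔ (q 0 - cc 0) ^ 2 + (q 1 - cc 1) ^ 2 ≤ ρ ^ 2 := by
  rw [EuclideanSpace.dist_eq, Fin.sum_univ_two]
  simp only [Real.dist_eq, sq_abs]
  rw [Real.sqrt_le_iff]
  constructor
  · exact fun h => h.2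
  · exact fun h => ⟨hρ, h⟩


/-- Correctness of the dynamic program for the line-separable weighted
unit-disk coverage problem: `δ_n` equals the minimum total weight of a subset
`S' ⊆ S` of disks covering all the points `p_1, …, p_n`.  The points are above
the x-axis, sorted by (distinct) x-coordinates; the disks all have the same
radius `ρ` and centers strictly below the x-axis; every point is covered by at
least one disk. -/
theorem deltaRec_eq_opt {ι : Type*} (S : Finset ι)
    (c : ι → EuclideanSpace ℝ (Fin 2)) (ρ : ℝ) (hρ : 0 < ρ)
    (w : ι → ℝ) (hw : ∀ s ∈ S, 0 < w s)
    (n : ℕ) (p : ℕ → EuclideanSpace ℝ (Fin 2))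
    (habove : ∀ i, 1 ≤ i → i ≤ n → 0 ≤ p i 1)
    (hbelow : ∀ s ∈ S, c s 1 < 0)
    (hsorted : ∀ i j, 1 ≤ i → i < j → j ≤ n → p i 0 < p j 0)
    (hcov : ∀ i, 1 ≤ i → i ≤ n → ∃ s ∈ S, dist (p i) (c s) ≤ ρ) :
    deltaRec S w (fun i s => dist (p i) (c s) ≤ ρ) n =
      sInf {x : ℝ | ∃ S' : Finset ι, S' ⊆ S ∧
        (∀ i, 1 ≤ i → i ≤ n → ∃ s ∈ S', dist (p i) (c s) ≤ ρ) ∧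
        x = ∑ s ∈ S', w s} := by
  refine dp_correct S w (fun i s => dist (p i) (c s) ≤ ρ) hw n hcov ?_
  intro s hs t ht j f m hj1 hjf hfm hmn hjs hms hfs hft
  have hjn : j ≤ n := by omega
  have hfn : f ≤ n := by omega
  have h1s := (dist_le_iff hρ.le).1 hjs
  have h3s := (dist_le_iff hρ.le).1 hms
  have h2s : ¬((p f 0 - c s 0) ^ 2 + (p f 1 - c s 1) ^ 2 ≤ ρ ^ 2) :=
    fun h => hfs ((dist_le_iff hρ.le).2 h)
  have h2t := (dist_le_iff hρ.le).1 hft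
  have hres := crossing hρ (hbelow s hs) (hbelow t ht)
    (habove j hj1 hjn) (habove f (by omega) hfn) (habove m (by omega) hmn)
    (hsorted j f hj1 hjf hfn) (hsorted f m (by omega) hfm hmn)
    h1s h3s h2s h2t
  rcases hres with h | h
  · exact Or.inl ((dist_le_iff hρ.le).2 h)
  · exact Or.inr ((dist_le_iff hρ.le).2 h)
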